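/- Let N be a positive integer such that either v_p(N) ≥ 3 for some odd prime p, or v_2(N) ≥ 4, where v_p(N) denotes the exponent of p in N. Then there exist finite groups G and G' of order N such that G is abelian, G' is nilpotent but not abelian, and a_m(G) = a_m(G') for every natural number m (i.e., G and G' have the same zeta function). -/

import Mathlib

/-- `subCount G m` is the number of subgroups of `G` of order `m`,
i.e. the coefficient `a_m(G)` of the zeta function `ζ_G(s) = Σ_m a_m(G) m^{-s}`. -/
noncomputable def subCount (G : Type*) [Group G] (m : ℕ) : ℕ :=
  Nat.card {H : Subgroup G // Nat.card H = m}


namespace Stmt7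

/-- Underlying type; `t` is a phantom parameter selecting the group structure. -/
def GrpT (p m M : ℕ) (_t : ℕ) : Type := ZMod (p^(m+2)) × ZMod p × ZMod M

variable {p m M t : ℕ}

/-- The square-zero twisting element. -/
def X (p m t : ℕ) : ZMod (p^(m+2)) := (t : ZMod (p^(m+2))) * (p : ZMod (p^(m+2)))^(m+1)

lemma Pz : ((p : ZMod (p^(m+2))))^(m+2) = 0 := by
  rw [← Nat.cast_pow, ZMod.natCast_self]

lemma XX : X p m t * X p m t = 0 := by
  have h : (p : ZMod (p^(m+2)))^(m+1) * (p : ZMod (p^(m+2)))^(m+1)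
      = (p : ZMod (p^(m+2)))^(m+2) * (p : ZMod (p^(m+2)))^m := by ring
  unfold X
  rw [mul_mul_mul_comm, h, Pz, zero_mul, mul_zero]

lemma one_add_pow {R : Type*} [CommRing R] {x : R} (hx : x * x = 0) (k : ℕ) :
    (1 + x)^k = 1 + (k : R) * x := by
  induction k with
  | zero => simp
  | succ k ih =>
    rw [pow_succ, ih, Nat.cast_succ]
    calc (1 + (k:R)*x) * (1+x) = 1 + ((k:R)+1)*x + (k:R)*(x*x) := by ring
    _ = 1 + ((k:R)+1)*x := by rw [hx, mul_zero, add_zero]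

def chi (p m t : ℕ) (i : ZMod p) : ZMod (p^(m+2)) := (1 + X p m t)^(i.val)

lemma chi_eq (i : ZMod p) : chi p m t i = 1 + ((i.val : ZMod (p^(m+2)))) * X p m t :=
  one_add_pow XX _

lemma chi_zero [NeZero p] : chi p m t (0 : ZMod p) = 1 := by
  rw [chi, ZMod.val_zero, pow_zero]

lemma u_pow_p : (1 + X p m t)^p = 1 := by
  rw [one_add_pow XX p]
  have h : (p : ZMod (p^(m+2))) * X p m t = 0 := by
    have h2 : (p : ZMod (p^(m+2))) * (p : ZMod (p^(m+2)))^(m+1) = (p : ZMod (p^(m+2)))^(m+2) := by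
      ring
    unfold X
    rw [mul_left_comm, h2, Pz, mul_zero]
  rw [h, add_zero]

lemma chi_add [NeZero p] (i j : ZMod p) : chi p m t (i+j) = chi p m t i * chi p m t j := by
  unfold chi
  rw [← pow_add, ZMod.val_add]
  conv_rhs => rw [← Nat.mod_add_div (i.val + j.val) p, pow_add, pow_mul, u_pow_p, one_pow, mul_one]

lemma chi_cancel [NeZero p] (i : ZMod p) : chi p m t i * chi p m t (-i) = 1 := by
  rw [← chi_add, add_neg_cancel, chi_zero]

/-- Constructor keeping the type `GrpT`. -/
def mk3 (t : ℕ) {p m M : ℕ} (x : ZMod (p^(m+2))) (i : ZMod p) (z : ZMod M) :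
    GrpT p m M t := (x, i, z)

@[simp] lemma mk3_f (x : ZMod (p^(m+2))) (i : ZMod p) (z : ZMod M) :
    (mk3 t x i z).1 = x := rfl
@[simp] lemma mk3_s (x : ZMod (p^(m+2))) (i : ZMod p) (z : ZMod M) :
    (mk3 t x i z).2.1 = i := rfl
@[simp] lemma mk3_t (x : ZMod (p^(m+2))) (i : ZMod p) (z : ZMod M) :
    (mk3 t x i z).2.2 = z := rfl

lemma GrpT.ext {a b : GrpT p m M t} (h1 : a.1 = b.1) (h2 : a.2.1 = b.2.1)
    (h3 : a.2.2 = b.2.2) : a = b := Prod.ext h1 (Prod.ext h2 h3)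

lemma eq_mk3 (a : GrpT p m M t) : a = mk3 t a.1 a.2.1 a.2.2 := rfl

instance instG [NeZero p] : Group (GrpT p m M t) where
  mul a b := mk3 t (a.1 + chi p m t a.2.1 * b.1) (a.2.1 + b.2.1) (a.2.2 + b.2.2)
  one := mk3 t 0 0 0
  inv a := mk3 t (-(chi p m t (-a.2.1) * a.1)) (-a.2.1) (-a.2.2)
  mul_assoc a b c := by
    refine GrpT.ext (t := t) ?_ ?_ ?_
    · show (a.1 + chi p m t a.2.1 * b.1) + chi p m t (a.2.1 + b.2.1) * c.1
        = a.1 + chi p m t a.2.1 * (b.1 + chi p m t b.2.1 * c.1)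
      rw [chi_add]; ring
    · show a.2.1 + b.2.1 + c.2.1 = a.2.1 + (b.2.1 + c.2.1)
      ring
    · show a.2.2 + b.2.2 + c.2.2 = a.2.2 + (b.2.2 + c.2.2)
      ring
  one_mul a := by
    refine GrpT.ext (t := t) ?_ ?_ ?_
    · show (0 : ZMod (p^(m+2))) + chi p m t 0 * a.1 = a.1
      rw [chi_zero]; ring
    · show (0 : ZMod p) + a.2.1 = a.2.1
      ring
    · show (0 : ZMod M) + a.2.2 = a.2.2
      ring
  mul_one a := by
    refine GrpT.ext (t := t) ?_ ?_ ?_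
    · show a.1 + chi p m t a.2.1 * 0 = a.1
      ring
    · show a.2.1 + 0 = a.2.1
      ring
    · show a.2.2 + 0 = a.2.2
      ring
  inv_mul_cancel a := by
    refine GrpT.ext (t := t) ?_ ?_ ?_
    · show -(chi p m t (-a.2.1) * a.1) + chi p m t (-a.2.1) * a.1 = 0
      ring
    · show -a.2.1 + a.2.1 = 0
      ring
    · show -a.2.2 + a.2.2 = 0
      ring

lemma mul_def [NeZero p] (a b : GrpT p m M t) :
    a * b = mk3 t (a.1 + chi p m t a.2.1 * b.1) (a.2.1 + b.2.1) (a.2.2 + b.2.2) := rfl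

lemma inv_def [NeZero p] (a : GrpT p m M t) :
    a⁻¹ = mk3 t (-(chi p m t (-a.2.1) * a.1)) (-a.2.1) (-a.2.2) := rfl

lemma one_def [NeZero p] : (1 : GrpT p m M t) = mk3 t 0 0 0 := rfl

lemma chi_nsmul [NeZero p] (k : ℕ) (j : ZMod p) :
    chi p m t (k • j) = 1 + (k : ZMod (p^(m+2))) * (j.val : ZMod (p^(m+2))) * X p m t := by
  induction k with
  | zero => rw [zero_smul, chi_zero]; push_cast; ring
  | succ k ih =>
    rw [succ_nsmul, chi_add, ih, chi_eq, Nat.cast_succ]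
    calc (1 + (k:ZMod (p^(m+2))) * (j.val) * X p m t) * (1 + (j.val) * X p m t)
        = 1 + ((k:ZMod (p^(m+2)))+1) * (j.val) * X p m t
          + (k:ZMod (p^(m+2))) * (j.val) * (j.val) * (X p m t * X p m t) := by ring
    _ = 1 + ((k:ZMod (p^(m+2)))+1) * (j.val) * X p m t := by rw [XX, mul_zero, add_zero]

lemma pow_def [NeZero p] (k : ℕ) (y : ZMod (p^(m+2))) (j : ZMod p) (z : ZMod M) :
    (mk3 t y j z)^k =
      mk3 t (((k : ZMod (p^(m+2)))
        + ((∑ i ∈ Finset.range k, i : ℕ) : ZMod (p^(m+2))) * (j.val : ZMod (p^(m+2))) * X p m t) * y)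
        (k • j) (k • z) := by
  induction k with
  | zero =>
    rw [pow_zero, one_def]
    refine GrpT.ext (t := t) ?_ ?_ ?_ <;> simp
  | succ k ih =>
    rw [pow_succ, ih, mul_def]
    refine GrpT.ext (t := t) ?_ ?_ ?_ <;> simp only [mk3_f, mk3_s, mk3_t]
    · rw [chi_nsmul, Finset.sum_range_succ, Nat.cast_succ]
      push_cast
      ring
    · rw [succ_nsmul]
    · rw [succ_nsmul]

end Stmt7

namespace Stmt7
variable {p m M t : ℕ}

lemma X_def : X p m t = (t : ZMod (p^(m+2))) * (p : ZMod (p^(m+2)))^(m+1) := rfl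

lemma key_mem [hp : Fact p.Prime] [NeZero M] (hM : ¬ p ∣ M) (hcase : Odd p ∨ 1 ≤ m)
    (S : Subgroup (GrpT p m M t)) {y : ZMod (p^(m+2))} {j : ZMod p} {z : ZMod M}
    (hb : mk3 t y j z ∈ S) (c : ZMod (p^(m+2))) :
    mk3 t ((p : ZMod (p^(m+2)))^(m+1) * c * y) 0 0 ∈ S := by
  have hprime : p.Prime := hp.out
  haveI : NeZero p := ⟨hprime.ne_zero⟩
  -- the sum
  set C : ℕ := ∑ i ∈ Finset.range (p*M), i with hC
  -- M is invertible
  have hcop : Nat.Coprime M (p^(m+2)) :=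
    (((Nat.Prime.coprime_iff_not_dvd hprime).mpr hM)).symm.pow_right _
  have hMu : IsUnit (M : ZMod (p^(m+2))) := (ZMod.isUnit_iff_coprime M (p^(m+2))).mpr hcop
  obtain ⟨Mu, hMu'⟩ := hMu
  have hMM' : (M : ZMod (p^(m+2))) * ↑Mu⁻¹ = 1 := by rw [← hMu']; exact Mu.mul_inv
  -- nilpotency
  have hPnil : IsNilpotent ((p : ZMod (p^(m+2)))) := ⟨m+2, Pz⟩
  have hCp : ∃ w : ZMod (p^(m+2)), (C : ZMod (p^(m+2))) * (p : ZMod (p^(m+2)))^m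
      = (p : ZMod (p^(m+2))) * w := by
    rcases hcase with hodd | hm
    · have hp2 : ¬ p ∣ 2 := by
        intro hd
        have : p = 2 := (Nat.prime_dvd_prime_iff_eq hprime Nat.prime_two).mp hd
        rw [this] at hodd
        simp [Nat.odd_iff] at hodd
      have hdC2 : p ∣ C * 2 := by
        rw [hC, Finset.sum_range_id_mul_two]
        exact ⟨M * (p*M - 1), by ring⟩
      have hpC : p ∣ C :=
        Nat.Coprime.dvd_of_dvd_mul_right ((Nat.Prime.coprime_iff_not_dvd hprime).mpr hp2) hdC2
      obtain ⟨D, hD⟩ := hpC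
      exact ⟨(D : ZMod (p^(m+2))) * (p : ZMod (p^(m+2)))^m, by rw [hD]; push_cast; ring⟩
    · obtain ⟨m', rfl⟩ : ∃ m', m = m' + 1 := ⟨m-1, (Nat.succ_pred_eq_of_pos hm).symm⟩
      exact ⟨(C : ZMod (p^(m'+1+2))) * (p : ZMod (p^(m'+1+2)))^m', by ring⟩
  obtain ⟨w, hw⟩ := hCp
  have hqnil : IsNilpotent ((↑Mu⁻¹ : ZMod (p^(m+2))) * (j.val : ZMod (p^(m+2))) * (t : ZMod (p^(m+2)))
      * ((C : ZMod (p^(m+2))) * (p : ZMod (p^(m+2)))^m)) := by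
    rw [hw, mul_comm ((p : ZMod (p^(m+2)))) w, ← mul_assoc]
    exact Commute.isNilpotent_mul_left (Commute.all _ _) hPnil
  have hv : IsUnit (1 + (↑Mu⁻¹ : ZMod (p^(m+2))) * (j.val : ZMod (p^(m+2))) * (t : ZMod (p^(m+2)))
      * ((C : ZMod (p^(m+2))) * (p : ZMod (p^(m+2)))^m)) := hqnil.isUnit_one_add
  obtain ⟨V, hV⟩ := hv
  -- b ^ (p*M)
  have h1 : (mk3 t y j z)^(p*M) ∈ S := S.pow_mem hb _
  rw [pow_def] at h1
  have hpMj : (p*M) • j = 0 := by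
    rw [nsmul_eq_mul]; push_cast; rw [ZMod.natCast_self]; ring
  have hpMz : (p*M) • z = 0 := by
    rw [nsmul_eq_mul]; push_cast; rw [ZMod.natCast_self]; ring
  rw [hpMj, hpMz, ← hC] at h1
  have hco : (((p*M : ℕ) : ZMod (p^(m+2)))
      + (C : ZMod (p^(m+2))) * (j.val : ZMod (p^(m+2))) * X p m t) * y
      = (p : ZMod (p^(m+2))) * (M : ZMod (p^(m+2))) * ↑V * y := by
    rw [hV, X_def]
    push_cast
    linear_combination (-((C : ZMod (p^(m+2))) * (j.val : ZMod (p^(m+2))) * (t : ZMod (p^(m+2)))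
      * (p : ZMod (p^(m+2)))^(m+1) * y)) * hMM'
  rw [hco] at h1
  -- now take a suitable power of the element h1
  set k : ℕ := ((p : ZMod (p^(m+2)))^m * c * ((V⁻¹ : (ZMod (p^(m+2)))ˣ) : ZMod (p^(m+2)))
      * ((Mu⁻¹ : (ZMod (p^(m+2)))ˣ) : ZMod (p^(m+2)))).val with hk
  have h2 : (mk3 t ((p : ZMod (p^(m+2))) * (M : ZMod (p^(m+2))) * ((V : (ZMod (p^(m+2)))ˣ) : ZMod (p^(m+2))) * y) 0 0)^k ∈ S :=
    S.pow_mem h1 _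
  rw [pow_def] at h2
  have hz0 : ((ZMod.val (0 : ZMod p) : ℕ) : ZMod (p^(m+2))) = 0 := by
    rw [ZMod.val_zero]; exact Nat.cast_zero
  rw [hz0, smul_zero, smul_zero] at h2
  have hfin : ((k : ZMod (p^(m+2)))
        + ((∑ i ∈ Finset.range k, i : ℕ) : ZMod (p^(m+2))) * 0 * X p m t)
        * ((p : ZMod (p^(m+2))) * (M : ZMod (p^(m+2))) * ((V : (ZMod (p^(m+2)))ˣ) : ZMod (p^(m+2))) * y)
      = (p : ZMod (p^(m+2)))^(m+1) * c * y := by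
    rw [mul_zero, zero_mul, add_zero, hk, ZMod.natCast_val, ZMod.cast_id]
    have hVV : (↑V⁻¹ : ZMod (p^(m+2))) * ↑V = 1 := V.inv_mul
    linear_combination ((p : ZMod (p^(m+2)))^(m+1) * c * y * (M : ZMod (p^(m+2)))
        * ((Mu⁻¹ : (ZMod (p^(m+2)))ˣ) : ZMod (p^(m+2)))) * hVV
      + ((p : ZMod (p^(m+2)))^(m+1) * c * y) * hMM'
  rw [hfin] at h2
  exact h2

end Stmt7

namespace Stmt7
variable {p m M : ℕ}

lemma PP : (p : ZMod (p^(m+2)))^(m+1) * (p : ZMod (p^(m+2)))^(m+1) = 0 := by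
  have h : (p : ZMod (p^(m+2)))^(m+1) * (p : ZMod (p^(m+2)))^(m+1)
      = (p : ZMod (p^(m+2)))^(m+2) * (p : ZMod (p^(m+2)))^m := by ring
  rw [h, Pz, zero_mul]

lemma chi_diff [NeZero p] (t t' : ℕ) (i : ZMod p) :
    chi p m t' i - chi p m t i
      = (i.val : ZMod (p^(m+2))) * ((t' : ZMod (p^(m+2))) - (t : ZMod (p^(m+2))))
        * (p : ZMod (p^(m+2)))^(m+1) := by
  rw [chi_eq, chi_eq, X_def, X_def]; ring

/-- Transfer a subgroup from the `t`-structure to the `t'`-structure. -/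
def moveSub [Fact p.Prime] [NeZero M] (hM : ¬ p ∣ M) (hcase : Odd p ∨ 1 ≤ m) (t t' : ℕ)
    (S : Subgroup (GrpT p m M t)) : Subgroup (GrpT p m M t') where
  carrier := {a : GrpT p m M t' | mk3 t a.1 a.2.1 a.2.2 ∈ S}
  one_mem' := S.one_mem
  mul_mem' := by
    haveI : NeZero p := ⟨(Fact.out : p.Prime).ne_zero⟩
    intro a b ha hb
    simp only [Set.mem_setOf_eq] at ha hb ⊢
    rw [mul_def]
    simp only [mk3_f, mk3_s, mk3_t]
    have h3 := S.mul_mem (S.mul_mem ha hb)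
      (key_mem hM hcase S hb
        (chi p m t (-(a.2.1 + b.2.1)) * ((t' : ZMod (p^(m+2))) - (t : ZMod (p^(m+2))))
          * ((a.2.1.val : ZMod (p^(m+2))))))
    have heq : mk3 t (a.1 + chi p m t' a.2.1 * b.1) (a.2.1 + b.2.1) (a.2.2 + b.2.2)
        = (mk3 t a.1 a.2.1 a.2.2 * mk3 t b.1 b.2.1 b.2.2)
          * mk3 t ((p : ZMod (p^(m+2)))^(m+1)
              * (chi p m t (-(a.2.1 + b.2.1)) * ((t' : ZMod (p^(m+2))) - (t : ZMod (p^(m+2))))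
                * ((a.2.1.val : ZMod (p^(m+2))))) * b.1) 0 0 := by
      rw [mul_def, mul_def]
      refine GrpT.ext ?_ ?_ ?_ <;> simp only [mk3_f, mk3_s, mk3_t]
      · have hD := chi_diff (p := p) (m := m) t t' a.2.1
        have hE := chi_cancel (p := p) (m := m) (t := t) (a.2.1 + b.2.1)
        linear_combination (b.1) * hD
          - ((a.2.1.val : ZMod (p^(m+2))) * ((t' : ZMod (p^(m+2))) - (t : ZMod (p^(m+2))))
            * (p : ZMod (p^(m+2)))^(m+1) * b.1) * hE
      · ring
      · ring
    rw [heq]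
    exact h3
  inv_mem' := by
    haveI : NeZero p := ⟨(Fact.out : p.Prime).ne_zero⟩
    intro a ha
    simp only [Set.mem_setOf_eq] at ha ⊢
    rw [inv_def]
    simp only [mk3_f, mk3_s, mk3_t]
    have h3 := S.mul_mem (S.inv_mem ha)
      (key_mem hM hcase S ha
        (chi p m t a.2.1 * (((-a.2.1).val : ZMod (p^(m+2))))
          * ((t : ZMod (p^(m+2))) - (t' : ZMod (p^(m+2))))))
    have heq : mk3 t (-(chi p m t' (-a.2.1) * a.1)) (-a.2.1) (-a.2.2)
        = (mk3 t a.1 a.2.1 a.2.2)⁻¹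
          * mk3 t ((p : ZMod (p^(m+2)))^(m+1)
              * (chi p m t a.2.1 * (((-a.2.1).val : ZMod (p^(m+2))))
                * ((t : ZMod (p^(m+2))) - (t' : ZMod (p^(m+2))))) * a.1) 0 0 := by
      rw [inv_def, mul_def]
      refine GrpT.ext ?_ ?_ ?_ <;> simp only [mk3_f, mk3_s, mk3_t]
      · have hD := chi_diff (p := p) (m := m) t t' (-a.2.1)
        have hE := chi_cancel (p := p) (m := m) (t := t) a.2.1
        linear_combination (-a.1) * hD
          + (((-a.2.1).val : ZMod (p^(m+2))) * ((t' : ZMod (p^(m+2))) - (t : ZMod (p^(m+2))))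
            * (p : ZMod (p^(m+2)))^(m+1) * a.1) * hE
      · ring
      · ring
    rw [heq]
    exact h3

end Stmt7

namespace Stmt7
variable {p m M : ℕ}

lemma moveSub_moveSub [Fact p.Prime] [NeZero M] (hM : ¬ p ∣ M) (hcase : Odd p ∨ 1 ≤ m)
    (t t' : ℕ) (S : Subgroup (GrpT p m M t)) :
    moveSub hM hcase t' t (moveSub hM hcase t t' S) = S := by
  refine le_antisymm ?_ ?_ <;> intro a ha <;> exact ha

/-- The order-preserving bijection between subgroups of the two structures. -/
def subEquiv [Fact p.Prime] [NeZero M] (hM : ¬ p ∣ M) (hcase : Odd p ∨ 1 ≤ m) (t t' : ℕ) :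
    Subgroup (GrpT p m M t) ≃ Subgroup (GrpT p m M t') where
  toFun := moveSub hM hcase t t'
  invFun := moveSub hM hcase t' t
  left_inv S := moveSub_moveSub hM hcase t t' S
  right_inv S := moveSub_moveSub hM hcase t' t S

lemma card_moveSub [Fact p.Prime] [NeZero M] (hM : ¬ p ∣ M) (hcase : Odd p ∨ 1 ≤ m)
    (t t' : ℕ) (S : Subgroup (GrpT p m M t)) :
    Nat.card (moveSub hM hcase t t' S) = Nat.card S :=
  Nat.card_congr ⟨fun x => ⟨x.1, x.2⟩, fun x => ⟨x.1, x.2⟩, fun _ => rfl, fun _ => rfl⟩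

end Stmt7

namespace Stmt7
variable {p m M : ℕ}

lemma chi_zero_t [NeZero p] (i : ZMod p) : chi p m 0 i = 1 := by
  rw [chi_eq, X_def]
  push_cast
  ring

lemma comm_t0 [NeZero p] (a b : GrpT p m M 0) : a * b = b * a := by
  rw [mul_def, mul_def]
  refine GrpT.ext ?_ ?_ ?_ <;> simp only [mk3_f, mk3_s, mk3_t]
  · rw [chi_zero_t, chi_zero_t]; ring
  · ring
  · ring

instance [NeZero p] [NeZero M] {t : ℕ} : Finite (GrpT p m M t) := by
  haveI : NeZero (p^(m+2)) := ⟨pow_ne_zero _ (NeZero.ne p)⟩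
  exact inferInstanceAs (Finite (ZMod (p^(m+2)) × ZMod p × ZMod M))

lemma card_GrpT [NeZero p] [NeZero M] {t : ℕ} :
    Nat.card (GrpT p m M t) = p^(m+3) * M := by
  have h : Nat.card (GrpT p m M t) = Nat.card (ZMod (p^(m+2)) × ZMod p × ZMod M) := rfl
  rw [h, Nat.card_prod, Nat.card_prod, Nat.card_zmod, Nat.card_zmod, Nat.card_zmod]
  ring

-- noncommutativity for t = 1
lemma noncomm_t1 [hp : Fact p.Prime] (hM : M ≠ 0) :
    ∃ a b : GrpT p m M 1, a * b ≠ b * a := by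
  haveI : NeZero p := ⟨hp.out.ne_zero⟩
  haveI : Fact (1 < p) := ⟨hp.out.one_lt⟩
  refine ⟨mk3 1 1 0 0, mk3 1 0 1 0, ?_⟩
  rw [mul_def, mul_def]
  simp only [mk3_f, mk3_s, mk3_t]
  intro h
  have h1 := congrArg Prod.fst h
  simp only [mk3] at h1
  rw [chi_zero, chi_eq, X_def, ZMod.val_one] at h1
  -- h1 : 1 + 1 * 0 = 0 + (1 + 1 * (1 * p^(m+1))) * 1
  have h2 : ((p : ZMod (p^(m+2))))^(m+1) = 0 := by
    push_cast at h1
    linear_combination -h1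
  rw [← Nat.cast_pow, ZMod.natCast_eq_zero_iff] at h2
  have hlt : p^(m+1) < p^(m+2) := Nat.pow_lt_pow_right hp.out.one_lt (by omega)
  have hpos : 0 < p^(m+1) := Nat.pow_pos hp.out.pos
  exact absurd (Nat.le_of_dvd hpos h2) (not_le.mpr hlt)

-- nilpotency
lemma central [NeZero p] {t : ℕ} (c : ZMod (p^(m+2))) :
    mk3 t ((p : ZMod (p^(m+2)))^(m+1) * c) 0 0 ∈ Subgroup.center (GrpT p m M t) := by
  rw [Subgroup.mem_center_iff]
  intro g
  rw [mul_def, mul_def]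
  refine GrpT.ext ?_ ?_ ?_ <;> simp only [mk3_f, mk3_s, mk3_t]
  · rw [chi_zero, chi_eq, X_def]
    linear_combination ((g.2.1.val : ZMod (p^(m+2))) * (t : ZMod (p^(m+2))) * c) * PP
  · ring
  · ring

lemma commutator_mem_center [NeZero p] {t : ℕ} (a b : GrpT p m M t) :
    a * b * a⁻¹ * b⁻¹ ∈ Subgroup.center (GrpT p m M t) := by
  have hc : a * b * a⁻¹ * b⁻¹
      = mk3 t ((p : ZMod (p^(m+2)))^(m+1)
          * ((t : ZMod (p^(m+2))) * ((a.2.1.val : ZMod (p^(m+2))) * b.1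
            - (b.2.1.val : ZMod (p^(m+2))) * a.1))) 0 0 := by
    rw [inv_def, inv_def, mul_def, mul_def, mul_def]
    refine GrpT.ext ?_ ?_ ?_ <;> simp only [mk3_f, mk3_s, mk3_t]
    · -- first coordinate computation
      rw [show a.2.1 + b.2.1 + -a.2.1 = b.2.1 from by ring]
      have e1 : chi p m t (a.2.1 + b.2.1) * chi p m t (-a.2.1) = chi p m t b.2.1 := by
        rw [← chi_add]; congr 1; ring
      have e2 : chi p m t b.2.1 * chi p m t (-b.2.1) = 1 := chi_cancel _
      have e3 : chi p m t a.2.1 = 1 + (a.2.1.val : ZMod (p^(m+2)))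
          * ((t : ZMod (p^(m+2))) * (p : ZMod (p^(m+2)))^(m+1)) := by rw [chi_eq, X_def]
      have e4 : chi p m t b.2.1 = 1 + (b.2.1.val : ZMod (p^(m+2)))
          * ((t : ZMod (p^(m+2))) * (p : ZMod (p^(m+2)))^(m+1)) := by rw [chi_eq, X_def]
      linear_combination (-a.1) * e1 + (-b.1) * e2 + b.1 * e3 + (-a.1) * e4
    · ring
    · ring
  rw [hc]
  exact central _

end Stmt7

namespace Stmt7
variable {p m M : ℕ}

lemma nilp [NeZero p] [NeZero M] {t : ℕ} : Group.IsNilpotent (GrpT p m M t) := by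
  refine ⟨⟨2, ?_⟩⟩
  rw [eq_top_iff]
  intro x _
  have h2 : (2 : ℕ) = 1 + 1 := rfl
  rw [h2, mem_upperCentralSeries_succ_iff]
  intro y
  rw [upperCentralSeries_one]
  exact commutator_mem_center x y

end Stmt7

namespace Stmt7
variable {p m M : ℕ}

lemma subCount_eq [Fact p.Prime] [NeZero M] (hM : ¬ p ∣ M) (hcase : Odd p ∨ 1 ≤ m)
    (t t' k : ℕ) : subCount (GrpT p m M t) k = subCount (GrpT p m M t') k := by
  haveI : NeZero p := ⟨(Fact.out : p.Prime).ne_zero⟩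
  refine Nat.card_congr (Equiv.subtypeEquiv (subEquiv hM hcase t t') (fun S => ?_))
  have : Nat.card ((subEquiv hM hcase t t') S) = Nat.card S := card_moveSub hM hcase t t' S
  rw [this]

end Stmt7


/-- If `N` is a positive integer with `v_p(N) ≥ 3` for some odd prime `p`, or
`v_2(N) ≥ 4`, then there exist an abelian group and a non-abelian nilpotent group,
both of order `N`, having the same zeta function. -/
theorem stmt_7 (N : ℕ) (hN : 0 < N)
    (h : (∃ p : ℕ, p.Prime ∧ Odd p ∧ 3 ≤ N.factorization p) ∨ 4 ≤ N.factorization 2) :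
    ∃ (G G' : Type) (_ : Group G) (_ : Group G') (_ : Finite G) (_ : Finite G'),
      Nat.card G = N ∧ Nat.card G' = N ∧
      (∀ a b : G, a * b = b * a) ∧
      Group.IsNilpotent G' ∧ (∃ a b : G', a * b ≠ b * a) ∧
      (∀ m : ℕ, subCount G m = subCount G' m) := by
  -- extract a prime p with suitable factorization data
  obtain ⟨p, hp, hcase⟩ : ∃ p : ℕ, p.Prime ∧
      (Odd p ∨ 1 ≤ N.factorization p - 3) ∧ 3 ≤ N.factorization p := by
    rcases h with ⟨p, hp, hodd, h3⟩ | h4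
    · exact ⟨p, hp, Or.inl hodd, h3⟩
    · exact ⟨2, Nat.prime_two, Or.inr (by omega), by omega⟩
  obtain ⟨hcase, h3⟩ := hcase
  haveI : Fact p.Prime := ⟨hp⟩
  haveI : NeZero p := ⟨hp.ne_zero⟩
  set n := N.factorization p with hn
  set m := n - 3 with hm
  set M := N / p^n with hM'
  have hMdvd : ¬ p ∣ M := Nat.not_dvd_ordCompl hp hN.ne'
  have hM0 : 0 < M := Nat.ordCompl_pos p hN.ne'
  haveI : NeZero M := ⟨hM0.ne'⟩
  have hcard : p^(m+3) * M = N := by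
    have : m + 3 = n := by omega
    rw [this, hM']
    exact Nat.ordProj_mul_ordCompl_eq_self N p
  refine ⟨Stmt7.GrpT p m M 0, Stmt7.GrpT p m M 1, inferInstance, inferInstance,
    inferInstance, inferInstance, ?_, ?_, Stmt7.comm_t0, Stmt7.nilp,
    Stmt7.noncomm_t1 hM0.ne', fun k => Stmt7.subCount_eq hMdvd hcase 0 1 k⟩
  · rw [Stmt7.card_GrpT]; exact hcard
  · rw [Stmt7.card_GrpT]; exact hcard
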